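/- Let a', b' ∈ ℝ with a' < b' and let f : [a', b'] → ℝ be continuous. Then the graph X = {(x, f(x)) : a' < x < b'} is locally boundary connected in ℝ². -/

import Mathlib

/-- A subset `X` of a topological space is *locally boundary connected* if every point of
the boundary `closure X \ X` has a base of neighbourhoods `N` such that `X ∩ N` is
connected. -/
def LocallyBoundaryConnected {α : Type*} [TopologicalSpace α] (X : Set α) : Prop :=
  ∀ p ∈ closure X \ X, ∀ U ∈ nhds p, ∃ N ∈ nhds p, N ⊆ U ∧ IsConnected (X ∩ N)

/-- for `a' < b'` and continuous `f : [a', b'] → ℝ`, the graph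
`{(x, f(x)) : a' < x < b'}` is locally boundary connected in `ℝ²`. -/
theorem section_locallyBoundaryConnected (a' b' : ℝ) (hab : a' < b')
    (f : ℝ → ℝ) (hf : ContinuousOn f (Set.Icc a' b')) :
    LocallyBoundaryConnected
      {q : ℝ × ℝ | q.1 ∈ Set.Ioo a' b' ∧ q.2 = f q.1} := by
  set g : ℝ → ℝ × ℝ := fun x => (x, f x) with hg
  have hgc : ContinuousOn g (Set.Icc a' b') := continuousOn_id.prodMk hf
  set X : Set (ℝ × ℝ) := {q : ℝ × ℝ | q.1 ∈ Set.Ioo a' b' ∧ q.2 = f q.1} with hX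
  have hXeq : X = g '' Set.Ioo a' b' := by
    ext q
    constructor
    · rintro ⟨h1, h2⟩
      exact ⟨q.1, h1, by rw [hg]; exact Prod.ext rfl h2.symm⟩
    · rintro ⟨x, hx, rfl⟩
      exact ⟨hx, rfl⟩
  have hclos : closure X ⊆ g '' Set.Icc a' b' := by
    apply closure_minimal
    · rw [hXeq]; exact Set.image_mono Set.Ioo_subset_Icc_self
    · exact (isCompact_Icc.image_of_continuousOn hgc).isClosed
  intro p hp U hU
  obtain ⟨c, hc, hpc⟩ := hclos hp.1
  -- get ε-ball inside U
  obtain ⟨ε, hε, hball⟩ := Metric.mem_nhds_iff.1 hU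
  -- continuity of g at c within Icc
  have htend : Filter.Tendsto g (nhdsWithin c (Set.Icc a' b')) (nhds p) := by
    rw [← hpc]; exact hgc c hc
  rw [Metric.tendsto_nhdsWithin_nhds] at htend
  obtain ⟨δ, hδ, hδ'⟩ := htend ε hε
  set δ₁ : ℝ := min δ (b' - a') with hδ₁def
  have hδ₁ : 0 < δ₁ := lt_min hδ (by linarith)
  have hδ₁δ : δ₁ ≤ δ := min_le_left _ _
  set I : Set ℝ := Set.Ioo (max a' (c - δ₁)) (min b' (c + δ₁)) with hIdef
  have hIlt : max a' (c - δ₁) < min b' (c + δ₁) := by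
    have hc1 := hc.1; have hc2 := hc.2
    exact max_lt (lt_min hab (by linarith)) (lt_min (by linarith) (by linarith))
  have hIsub : I ⊆ Set.Icc a' b' := fun x hx =>
    ⟨le_of_lt (lt_of_le_of_lt (le_max_left _ _) hx.1),
     le_of_lt (lt_of_lt_of_le hx.2 (min_le_left _ _))⟩
  set N : Set (ℝ × ℝ) := {q : ℝ × ℝ | |q.1 - c| < δ₁} ∩ Metric.ball p ε with hNdef
  have hNopen : IsOpen N := by
    apply IsOpen.inter
    · have : ({q : ℝ × ℝ | |q.1 - c| < δ₁} : Set (ℝ × ℝ)) =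
          (fun q : ℝ × ℝ => q.1) ⁻¹' {x | |x - c| < δ₁} := rfl
      rw [this]
      exact (isOpen_lt (by continuity) continuous_const).preimage continuous_fst
    · exact Metric.isOpen_ball
  have hpN : p ∈ N := by
    constructor
    · show |p.1 - c| < δ₁
      rw [← hpc]; simpa [hg] using hδ₁
    · exact Metric.mem_ball_self hε
  have hmem : ∀ x ∈ I, dist (g x) p < ε := by
    intro x hx
    apply hδ' (hIsub hx)
    rw [Real.dist_eq]
    have h1 : x - c < δ₁ := by
      have := lt_of_lt_of_le hx.2 (min_le_right _ _); linarith
    have h2 : c - x < δ₁ := by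
      have := lt_of_le_of_lt (le_max_right _ _) hx.1; linarith
    calc |x - c| < δ₁ := abs_sub_lt_iff.2 ⟨h1, h2⟩
      _ ≤ δ := hδ₁δ
  have hXN : X ∩ N = g '' I := by
    ext q
    constructor
    · rintro ⟨⟨h1, h2⟩, hN1, hN2⟩
      refine ⟨q.1, ?_, Prod.ext rfl h2.symm⟩
      have habs : |q.1 - c| < δ₁ := hN1
      rw [abs_sub_lt_iff] at habs
      exact ⟨max_lt h1.1 (by linarith [habs.2]), lt_min h1.2 (by linarith [habs.1])⟩
    · rintro ⟨x, hx, rfl⟩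
      have hxI : x ∈ Set.Ioo a' b' :=
        ⟨lt_of_le_of_lt (le_max_left _ _) hx.1, lt_of_lt_of_le hx.2 (min_le_left _ _)⟩
      refine ⟨⟨hxI, rfl⟩, ?_, ?_⟩
      · show |(g x).1 - c| < δ₁
        have h1 : x - c < δ₁ := by
          have := lt_of_lt_of_le hx.2 (min_le_right _ _); linarith
        have h2 : c - x < δ₁ := by
          have := lt_of_le_of_lt (le_max_right _ _) hx.1; linarith
        simpa [hg] using abs_sub_lt_iff.2 ⟨h1, h2⟩
      · exact Metric.mem_ball.2 (hmem x hx)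
  refine ⟨N, hNopen.mem_nhds hpN, fun q hq => hball hq.2, ?_⟩
  rw [hXN]
  exact (isConnected_Ioo hIlt).image g (hgc.mono hIsub)
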